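/- Discrete Gronwall lemma with variable steps: Let {k_n}, {a_n}, {b_n}, {c_n}, {γ_n} be sequences of nonnegative reals and B ≥ 0 a constant such that for each n, a_n + Σ_{m=0}^n k_m b_m ≤ Σ_{m=0}^n k_m γ_m a_m + Σ_{m=0}^n k_m c_m + B, and k_m γ_m < 1 for all m ≤ n. Then, with σ_m := (1 − k_m γ_m)^{-1}, it holds a_n + Σ_{m=0}^n k_m b_m ≤ exp(Σ_{m=0}^n k_m σ_m γ_m) · (Σ_{m=0}^n k_m c_m + B). -/

import Mathlib

open Finset

namespace VariableStep

/-- Discrete Gronwall lemma with variable time steps (implicit form). -/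
theorem discrete_gronwall (k a b c γ : ℕ → ℝ) (B : ℝ)
    (hk : ∀ n, 0 ≤ k n) (ha : ∀ n, 0 ≤ a n) (hb : ∀ n, 0 ≤ b n)
    (hc : ∀ n, 0 ≤ c n) (hγ : ∀ n, 0 ≤ γ n) (hB : 0 ≤ B)
    (hsmall : ∀ m, k m * γ m < 1)
    (hbound : ∀ n, a n + ∑ m ∈ range (n + 1), k m * b m ≤
      ∑ m ∈ range (n + 1), k m * γ m * a m + ∑ m ∈ range (n + 1), k m * c m + B) :
    ∀ n, a n + ∑ m ∈ range (n + 1), k m * b m ≤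
      Real.exp (∑ m ∈ range (n + 1), k m * (1 - k m * γ m)⁻¹ * γ m) *
        (∑ m ∈ range (n + 1), k m * c m + B) := by
  have hpos : ∀ m, (0:ℝ) < 1 - k m * γ m := fun m => by linarith [hsmall m]
  have hinv : ∀ m, 0 ≤ (1 - k m * γ m)⁻¹ := fun m => le_of_lt (inv_pos.2 (hpos m))
  have hC : ∀ n, (0:ℝ) ≤ ∑ m ∈ range (n+1), k m * c m := fun n =>
    Finset.sum_nonneg fun m _ => mul_nonneg (hk m) (hc m)
  have hE : ∀ n, (0:ℝ) ≤ ∑ m ∈ range (n+1), k m * (1 - k m * γ m)⁻¹ * γ m := fun n =>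
    Finset.sum_nonneg fun m _ => mul_nonneg (mul_nonneg (hk m) (hinv m)) (hγ m)
  have hkey : ∀ n, a n ≤ (1 - k n * γ n)⁻¹ *
      (∑ m ∈ range n, k m * γ m * a m + (∑ m ∈ range (n+1), k m * c m + B)) := by
    intro n
    have hb' := hbound n
    have hbs : (0:ℝ) ≤ ∑ m ∈ range (n+1), k m * b m :=
      Finset.sum_nonneg fun m _ => mul_nonneg (hk m) (hb m)
    rw [Finset.sum_range_succ (f := fun m => k m * γ m * a m)] at hb'
    have h1 : (1 - k n * γ n) * a n ≤
        ∑ m ∈ range n, k m * γ m * a m + (∑ m ∈ range (n+1), k m * c m + B) := by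
      nlinarith
    have h2 := mul_le_mul_of_nonneg_left h1 (hinv n)
    rwa [← mul_assoc, inv_mul_cancel₀ (ne_of_gt (hpos n)), one_mul] at h2
  have main : ∀ n, ∑ m ∈ range (n+1), k m * γ m * a m ≤
      (Real.exp (∑ m ∈ range (n+1), k m * (1 - k m * γ m)⁻¹ * γ m) - 1) *
      (∑ m ∈ range (n+1), k m * c m + B) := by
    intro n
    induction n with
    | zero =>
      simp only [zero_add, range_one, sum_singleton]
      have hk0 := hkey 0
      simp only [range_zero, sum_empty, zero_add, range_one, sum_singleton] at hk0
      set x := k 0 * (1 - k 0 * γ 0)⁻¹ * γ 0 with hx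
      have hx0 : 0 ≤ x := mul_nonneg (mul_nonneg (hk 0) (hinv 0)) (hγ 0)
      have hexp : 1 + x ≤ Real.exp x := by linarith [Real.add_one_le_exp x]
      have hCB : 0 ≤ k 0 * c 0 + B := add_nonneg (mul_nonneg (hk 0) (hc 0)) hB
      have h3 : k 0 * γ 0 * a 0 ≤ x * (k 0 * c 0 + B) := by
        calc k 0 * γ 0 * a 0 ≤ k 0 * γ 0 * ((1 - k 0 * γ 0)⁻¹ * (k 0 * c 0 + B)) :=
              mul_le_mul_of_nonneg_left hk0 (mul_nonneg (hk 0) (hγ 0))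
          _ = x * (k 0 * c 0 + B) := by ring
      nlinarith [mul_le_mul_of_nonneg_right hexp hCB]
    | succ n ih =>
      have hCmono : (∑ m ∈ range (n+1), k m * c m) ≤ ∑ m ∈ range (n+2), k m * c m :=
        Finset.sum_le_sum_of_subset_of_nonneg (by exact range_subset_range.2 (by omega))
          (fun m _ _ => mul_nonneg (hk m) (hc m))
      set D := ∑ m ∈ range (n+1), k m * γ m * a m with hD
      set E := ∑ m ∈ range (n+1), k m * (1 - k m * γ m)⁻¹ * γ m with hEdef
      set C := ∑ m ∈ range (n+2), k m * c m with hCdef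
      set x := k (n+1) * (1 - k (n+1) * γ (n+1))⁻¹ * γ (n+1) with hxdef
      have hx0 : 0 ≤ x := mul_nonneg (mul_nonneg (hk (n+1)) (hinv (n+1))) (hγ (n+1))
      have hsum1 : ∑ m ∈ range (n+2), k m * γ m * a m = D + k (n+1) * γ (n+1) * a (n+1) :=
        Finset.sum_range_succ _ _
      have hsum2 : ∑ m ∈ range (n+2), k m * (1 - k m * γ m)⁻¹ * γ m = E + x :=
        Finset.sum_range_succ _ _
      rw [hsum1, hsum2]
      have hkn := hkey (n+1)
      have h3 : k (n+1) * γ (n+1) * a (n+1) ≤ x * (D + (C + B)) := by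
        calc k (n+1) * γ (n+1) * a (n+1)
            ≤ k (n+1) * γ (n+1) * ((1 - k (n+1) * γ (n+1))⁻¹ * (D + (C + B))) :=
              mul_le_mul_of_nonneg_left hkn (mul_nonneg (hk (n+1)) (hγ (n+1)))
          _ = x * (D + (C + B)) := by ring
      have hD0 : 0 ≤ D := Finset.sum_nonneg fun m _ =>
        mul_nonneg (mul_nonneg (hk m) (hγ m)) (ha m)
      have hCB : 0 ≤ C + B := add_nonneg (hC (n+1)) hB
      have heE : 1 ≤ Real.exp E := Real.one_le_exp (hE n)
      have hexp : 1 + x ≤ Real.exp x := by linarith [Real.add_one_le_exp x]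
      have hexpE : Real.exp (E + x) = Real.exp E * Real.exp x := Real.exp_add E x
      have hD2 : D ≤ (Real.exp E - 1) * (C + B) := by
        refine ih.trans ?_
        have : (∑ m ∈ range (n+1), k m * c m) + B ≤ C + B := by linarith
        nlinarith
      rw [hexpE]
      nlinarith [mul_le_mul_of_nonneg_right hexp (mul_nonneg (sub_nonneg.2 heE) hCB),
        mul_le_mul_of_nonneg_right hexp hCB, mul_nonneg hx0 hD0,
        mul_le_mul_of_nonneg_left hD2 hx0]
  intro n
  have h := hbound n
  have hm := main n
  nlinarith [Real.exp_pos (∑ m ∈ range (n+1), k m * (1 - k m * γ m)⁻¹ * γ m)]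

end VariableStep
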